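/- Let A be a commutative noetherian ring and 𝔭 a prime ideal of A. Then the indecomposable injective A-module E(A/𝔭), the injective hull of A/𝔭, is naturally an A_𝔭-module, and the localization map E(A/𝔭) → (E(A/𝔭))_𝔭 is an isomorphism. -/

import Mathlib

universe u

section Aux

variable {A : Type u} [CommRing A] (𝔭 : Ideal A) [𝔭.IsPrime]
    (E : Type u) [AddCommGroup E] [Module A E]

/-- Multiplication by an element outside `𝔭` is bijective on the injective hull. -/
theorem aux_smul_bijective
    (hinj : Module.Injective A E)
    (ι : (A ⧸ 𝔭) →ₗ[A] E)
    (hmono : Function.Injective ι)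
    (hess : ∀ W : Submodule A E, W ≠ ⊥ → LinearMap.range ι ⊓ W ≠ ⊥)
    (s : A) (hs : s ∉ 𝔭) :
    Function.Bijective (fun x : E => s • x) := by
  have hdom : IsDomain (A ⧸ 𝔭) := Ideal.Quotient.isDomain 𝔭
  have hmks : Ideal.Quotient.mk 𝔭 s ≠ 0 := by
    simpa [Ideal.Quotient.eq_zero_iff_mem] using hs
  set g : E →ₗ[A] E := s • LinearMap.id with hg
  have hgapp : ∀ x : E, g x = s • x := fun x => rfl
  -- `ι` of a nonzero element is nonzero
  have hι_ne : ∀ q : A ⧸ 𝔭, q ≠ 0 → ι q ≠ 0 := by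
    intro q hq h0
    exact hq (hmono (by simpa using h0))
  -- injectivity of multiplication by s
  have hginj : Function.Injective g := by
    rw [← LinearMap.ker_eq_bot]
    by_contra hker
    obtain ⟨x, hx, hx0⟩ := Submodule.exists_mem_ne_zero_of_ne_bot
      (hess (LinearMap.ker g) hker)
    obtain ⟨hxr, hxk⟩ := Submodule.mem_inf.mp hx
    obtain ⟨q, rfl⟩ := hxr
    have hq0 : q ≠ 0 := fun h => hx0 (by simp [h])
    have : ι (s • q) = 0 := by
      rw [map_smul]
      simpa [hgapp] using (LinearMap.mem_ker.mp hxk)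
    have hsq : s • q = 0 := hmono (by simpa using this)
    have hmul : Ideal.Quotient.mk 𝔭 s * q = 0 := by
      rw [← Ideal.Quotient.algebraMap_eq, ← Algebra.smul_def]
      exact hsq
    rcases mul_eq_zero.mp hmul with h | h
    · exact hmks h
    · exact hq0 h
  refine ⟨fun x y hxy => hginj hxy, ?_⟩
  -- extend the identity along g using injectivity of E
  obtain ⟨h, hh⟩ := hinj.out g hginj LinearMap.id
  simp only [LinearMap.id_apply] at hh
  -- h is injective
  have hhinj : Function.Injective h := by
    rw [← LinearMap.ker_eq_bot]
    by_contra hker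
    obtain ⟨z, hz, hz0⟩ := Submodule.exists_mem_ne_zero_of_ne_bot
      (hess (LinearMap.ker h) hker)
    obtain ⟨hzr, hzk⟩ := Submodule.mem_inf.mp hz
    obtain ⟨q₁, rfl⟩ := hzr
    have hq₁ : q₁ ≠ 0 := fun h' => hz0 (by simp [h'])
    -- range g is nonzero
    have hrg : LinearMap.range g ≠ ⊥ := by
      intro hbot
      have h1 : (1 : A ⧸ 𝔭) ≠ 0 := one_ne_zero
      have : g (ι 1) = 0 := by
        rw [← Submodule.mem_bot (R := A), ← hbot]; exact LinearMap.mem_range_self g (ι 1)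
      exact hι_ne 1 h1 (hginj (by simpa using this))
    obtain ⟨y, hy, hy0⟩ := Submodule.exists_mem_ne_zero_of_ne_bot (hess _ hrg)
    obtain ⟨hyr, hyg⟩ := Submodule.mem_inf.mp hy
    obtain ⟨q₂, rfl⟩ := hyr
    have hq₂ : q₂ ≠ 0 := fun h' => hy0 (by simp [h'])
    obtain ⟨a, rfl⟩ := Ideal.Quotient.mk_surjective q₂
    obtain ⟨b, rfl⟩ := Ideal.Quotient.mk_surjective q₁
    -- w := ι (q₂ * q₁) lies in both ker h and range g, and is nonzero
    set w : E := ι (Ideal.Quotient.mk 𝔭 a * Ideal.Quotient.mk 𝔭 b) with hw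
    have hw_ker : w ∈ LinearMap.ker h := by
      have : w = a • ι (Ideal.Quotient.mk 𝔭 b) := by
        rw [← map_smul]; rfl
      rw [this]; exact Submodule.smul_mem _ a hzk
    have hw_rg : w ∈ LinearMap.range g := by
      have hcomm : w = b • ι (Ideal.Quotient.mk 𝔭 a) := by
        rw [← map_smul]
        rw [Algebra.smul_def, Ideal.Quotient.algebraMap_eq, mul_comm]
      rw [hcomm]; exact Submodule.smul_mem _ b hyg
    have hw0 : w ≠ 0 := hι_ne _ (mul_ne_zero hq₂ hq₁)
    obtain ⟨u, hu⟩ := hw_rg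
    have hu0 : u = 0 := by
      have := hh u
      rw [hu] at this
      rw [LinearMap.mem_ker.mp hw_ker] at this
      exact this.symm
    exact hw0 (by rw [← hu, hu0, map_zero])
  -- surjectivity
  intro y
  refine ⟨h y, ?_⟩
  have : h (g (h y)) = h y := hh (h y)
  exact hhinj this

end Aux

/-- Let `A` be a commutative noetherian ring, `𝔭` a prime ideal and `E` an injective hull of
`A/𝔭`.  Then `E` is naturally a module over the localization `A_𝔭` (compatibly with its
`A`-module structure), and the localization map `E → E_𝔭` is an isomorphism. -/
theorem injective_hull_prime_is_module_over_localization_and_localization_bijective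
    {A : Type u} [CommRing A] [IsNoetherianRing A]
    (𝔭 : Ideal A) [𝔭.IsPrime]
    (E : Type u) [AddCommGroup E] [Module A E]
    (hinj : Module.Injective A E)
    (ι : (A ⧸ 𝔭) →ₗ[A] E)
    (hmono : Function.Injective ι)
    (hess : ∀ W : Submodule A E, W ≠ ⊥ → LinearMap.range ι ⊓ W ≠ ⊥) :
    (∃ m : Module (Localization.AtPrime 𝔭) E,
      ∀ (a : A) (x : E),
        (letI := m; (algebraMap A (Localization.AtPrime 𝔭) a) • x) = a • x) ∧
    Function.Bijective (LocalizedModule.mkLinearMap 𝔭.primeCompl E) := by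
  have hbij : ∀ s : 𝔭.primeCompl, Function.Bijective (fun x : E => (s : A) • x) :=
    fun s => aux_smul_bijective 𝔭 E hinj ι hmono hess s s.2
  have hloc : IsLocalizedModule 𝔭.primeCompl (LinearMap.id : E →ₗ[A] E) := by
    refine { map_units := fun s => ?_, surj := fun y => ⟨⟨y, 1⟩, by simp⟩,
             exists_of_eq := fun h => ⟨1, by simpa using h⟩ }
    rw [Module.End.isUnit_iff]
    have := hbij s
    constructor
    · intro x y hxy
      exact this.1 (by simpa [Module.algebraMap_end_apply] using hxy)
    · intro y
      obtain ⟨x, hx⟩ := this.2 y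
      exact ⟨x, by simpa [Module.algebraMap_end_apply] using hx⟩
  -- the canonical equivalence
  let e : LocalizedModule 𝔭.primeCompl E ≃ₗ[A] E :=
    IsLocalizedModule.iso 𝔭.primeCompl (LinearMap.id : E →ₗ[A] E)
  have hmk : ∀ x : E, e.symm x = LocalizedModule.mkLinearMap 𝔭.primeCompl E x := by
    intro x
    have := congrArg (fun f : E →ₗ[A] LocalizedModule 𝔭.primeCompl E => f x)
      (IsLocalizedModule.iso_symm_comp 𝔭.primeCompl (LinearMap.id : E →ₗ[A] E))
    simpa using this
  constructor
  · -- module structure transported along e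
    refine ⟨{ smul := fun c x => e (c • e.symm x)
              one_smul := fun x => by
                show e ((1 : Localization.AtPrime 𝔭) • e.symm x) = x
                rw [one_smul, e.apply_symm_apply]
              mul_smul := fun a b x => by
                show e ((a * b) • e.symm x) = e (a • e.symm (e (b • e.symm x)))
                rw [e.symm_apply_apply, mul_smul]
              smul_zero := fun a => by
                show e (a • e.symm 0) = 0
                simp
              smul_add := fun a x y => by
                show e (a • e.symm (x + y)) = e (a • e.symm x) + e (a • e.symm y)
                rw [map_add e.symm, smul_add, map_add]
              add_smul := fun a b x => by
                show e ((a + b) • e.symm x) = e (a • e.symm x) + e (b • e.symm x)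
                rw [add_smul, map_add]
              zero_smul := fun x => by
                show e ((0 : Localization.AtPrime 𝔭) • e.symm x) = 0
                simp }, ?_⟩
    intro a x
    show e ((algebraMap A (Localization.AtPrime 𝔭) a) • e.symm x) = a • x
    rw [algebraMap_smul, map_smul, e.apply_symm_apply]
  · -- bijectivity of the localization map
    have : ⇑(LocalizedModule.mkLinearMap 𝔭.primeCompl E) = ⇑e.symm := by
      ext x; exact (hmk x).symm
    rw [this]
    exact e.symm.bijective
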